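/- Let N = P^u(ℤ_p), viewed inside GL_n(ℚ_p). For every block boundary i = D(j) (1 ≤ j ≤ t), the double coset N t_i N decomposes as the disjoint union N t_i N = ⨆_{B'} u(B')·t_i·N, where B' runs over all i×(n−i) matrices with entries in {0, 1, …, p−1}. -/

import Mathlib

/-!
STATEMENT 7: Let N = P^u(ℤ_p), viewed inside GL_n(ℚ_p). For every block boundary
i = D(j) (1 ≤ j ≤ t), the double coset N t_i N decomposes as the disjoint union
N t_i N = ⨆_{B'} u(B')·t_i·N, where B' runs over all i×(n−i) matrices with entries in
{0, 1, …, p−1}.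
-/

open Matrix

noncomputable section
namespace PIw

/-- Partial sums of the partition: `Dsum nn j = n_1 + ⋯ + n_j` (`nn` is 0-indexed). -/
def Dsum {t : ℕ} (nn : Fin t → ℕ) (j : ℕ) : ℕ :=
  ∑ i ∈ Finset.range j, if h : i < t then nn ⟨i, h⟩ else 0

/-- Index (0-indexed) of the block containing position `k`. -/
def blkOf {t : ℕ} (nn : Fin t → ℕ) (k : ℕ) : ℕ :=
  ((Finset.range t).filter fun j => Dsum nn (j + 1) ≤ k).card

/-- The block function on `Fin n`. -/
def bfun {t : ℕ} (nn : Fin t → ℕ) : Fin (Dsum nn t) → ℕ := fun k => blkOf nn (k : ℕ)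

/-- Block upper triangular (entries strictly below the diagonal blocks vanish). -/
def IsBlockUpper {t : ℕ} (nn : Fin t → ℕ) {R : Type*} [CommRing R]
    (M : Matrix (Fin (Dsum nn t)) (Fin (Dsum nn t)) R) : Prop :=
  M.BlockTriangular (bfun nn)

/-- Block upper triangular with identity diagonal blocks: membership in `P^u(R)`. -/
def IsBlockUnipotent {t : ℕ} (nn : Fin t → ℕ) {R : Type*} [CommRing R]
    (M : Matrix (Fin (Dsum nn t)) (Fin (Dsum nn t)) R) : Prop :=
  IsBlockUpper nn M ∧
    ∀ k l, bfun nn k = bfun nn l → M k l = if k = l then 1 else 0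

variable (p : ℕ) [Fact p.Prime]

/-- Coefficient-wise inclusion `ℤ_p → ℚ_p` on matrices. -/
def toQ {N : ℕ} (M : Matrix (Fin N) (Fin N) ℤ_[p]) : Matrix (Fin N) (Fin N) ℚ_[p] :=
  M.map (fun x => (x : ℚ_[p]))

/-- The matrix `t_i = diag(p·1_i, 1_{n-i})` in `GL_n(ℚ_p)`. -/
def tMat (N i : ℕ) : Matrix (Fin N) (Fin N) ℚ_[p] :=
  Matrix.diagonal fun k => if (k : ℕ) < i then (p : ℚ_[p]) else 1

/-- The unipotent matrix `u(B) = (1_i, B; 0, 1_{n-i})`, where `B` is an `i × (n-i)`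
matrix of natural numbers (viewed in `ℚ_p`). -/
def uMat (N i : ℕ) (B : Matrix (Fin i) (Fin (N - i)) ℕ) :
    Matrix (Fin N) (Fin N) ℚ_[p] := fun k l =>
  if h : (k : ℕ) < i ∧ i ≤ (l : ℕ) then
    (B ⟨(k : ℕ), h.1⟩ ⟨(l : ℕ) - i, Nat.sub_lt_sub_right h.2 l.isLt⟩ : ℚ_[p])
  else if k = l then 1 else 0

/-! ### Auxiliary lemmas -/

section Arith
variable {t : ℕ} (nn : Fin t → ℕ)

lemma Dsum_mono : Monotone (Dsum nn) := fun _ _ hab =>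
  Finset.sum_le_sum_of_subset (Finset.range_subset_range.2 hab)

lemma blkOf_le_iff {j k : ℕ} (hj : j < t) :
    blkOf nn k ≤ j ↔ k < Dsum nn (j + 1) := by
  constructor
  · intro h
    by_contra hk
    push_neg at hk
    have hsub : Finset.range (j + 1) ⊆
        (Finset.range t).filter fun j' => Dsum nn (j' + 1) ≤ k := by
      intro x hx
      simp only [Finset.mem_range] at hx
      simp only [Finset.mem_filter, Finset.mem_range]
      exact ⟨by omega, le_trans (Dsum_mono nn (by omega)) hk⟩
    have h2 := Finset.card_le_card hsub
    rw [Finset.card_range] at h2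
    unfold blkOf at h
    omega
  · intro h
    have hsub : ((Finset.range t).filter fun j' => Dsum nn (j' + 1) ≤ k) ⊆
        Finset.range j := by
      intro x hx
      simp only [Finset.mem_filter, Finset.mem_range] at hx ⊢
      by_contra hxj
      push_neg at hxj
      have := Dsum_mono nn (show j + 1 ≤ x + 1 by omega)
      omega
    have h2 := Finset.card_le_card hsub
    rw [Finset.card_range] at h2
    exact h2

lemma bfun_lt (ht : 0 < t) (k : Fin (Dsum nn t)) : bfun nn k < t := by
  have h := (blkOf_le_iff nn (j := t - 1) (k := (k : ℕ)) (by omega)).2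
    (by have := k.isLt; rw [show (t - 1) + 1 = t by omega]; exact this)
  unfold bfun
  omega

end Arith

section SUtheory
variable {t : ℕ} {nn : Fin t → ℕ} {R : Type*} [CommRing R]

/-- Strictly block-upper matrices. -/
def SU (nn : Fin t → ℕ) (S : Matrix (Fin (Dsum nn t)) (Fin (Dsum nn t)) R) : Prop :=
  ∀ k l, ¬ bfun nn k < bfun nn l → S k l = 0

lemma SU.add {S S' : Matrix (Fin (Dsum nn t)) (Fin (Dsum nn t)) R}
    (h : SU nn S) (h' : SU nn S') : SU nn (S + S') := fun k l hkl => by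
  rw [Matrix.add_apply, h k l hkl, h' k l hkl, add_zero]

lemma SU.mul {S S' : Matrix (Fin (Dsum nn t)) (Fin (Dsum nn t)) R}
    (h : SU nn S) (h' : SU nn S') : SU nn (S * S') := by
  intro k l hkl
  rw [Matrix.mul_apply]
  apply Finset.sum_eq_zero
  intro m _
  by_cases hm : bfun nn k < bfun nn m
  · rw [h' m l (fun hml => hkl (hm.trans hml)), mul_zero]
  · rw [h k m hm, zero_mul]

lemma SU.neg {S : Matrix (Fin (Dsum nn t)) (Fin (Dsum nn t)) R}
    (h : SU nn S) : SU nn (-S) := fun k l hkl => by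
  rw [Matrix.neg_apply, h k l hkl, neg_zero]

lemma SU.pow_succ' {S : Matrix (Fin (Dsum nn t)) (Fin (Dsum nn t)) R}
    (h : SU nn S) (m : ℕ) : SU nn (S ^ (m + 1)) := by
  induction m with
  | zero => simpa using h
  | succ m ih => rw [pow_succ]; exact ih.mul h

lemma SU.finsum {ι : Type*} (s : Finset ι) (f : ι → Matrix (Fin (Dsum nn t)) (Fin (Dsum nn t)) R)
    (h : ∀ i ∈ s, SU nn (f i)) : SU nn (∑ i ∈ s, f i) := by
  intro k l hkl
  rw [Matrix.sum_apply]
  exact Finset.sum_eq_zero fun i hi => h i hi k l hkl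

lemma SU.pow_eq_zero {S : Matrix (Fin (Dsum nn t)) (Fin (Dsum nn t)) R}
    (hS : SU nn S) (ht : 0 < t) : S ^ t = 0 := by
  have key : ∀ (m : ℕ) (k l), bfun nn l < bfun nn k + m → (S ^ m) k l = 0 := by
    intro m
    induction m with
    | zero =>
      intro k l h
      rw [pow_zero]
      exact Matrix.one_apply_ne (by rintro rfl; omega)
    | succ m ih =>
      intro k l h
      rw [pow_succ, Matrix.mul_apply]
      apply Finset.sum_eq_zero
      intro m' _
      by_cases hm : bfun nn m' < bfun nn l
      · rw [ih k m' (by omega), zero_mul]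
      · rw [hS m' l hm, mul_zero]
  ext k l
  rw [key t k l (by have := bfun_lt nn ht l; omega)]
  simp

lemma isBU_iff_SU {M : Matrix (Fin (Dsum nn t)) (Fin (Dsum nn t)) R} :
    IsBlockUnipotent nn M ↔ SU nn (M - 1) := by
  constructor
  · rintro ⟨hup, hdiag⟩ k l hkl
    rcases lt_trichotomy (bfun nn k) (bfun nn l) with h | h | h
    · exact absurd h hkl
    · rw [Matrix.sub_apply, hdiag k l h, Matrix.one_apply]
      split <;> simp
    · rw [Matrix.sub_apply, hup h, Matrix.one_apply_ne (by rintro rfl; omega), sub_zero]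
  · intro hS
    constructor
    · intro k l hkl
      have h2 := hS k l (by omega)
      rwa [Matrix.sub_apply, Matrix.one_apply_ne (by rintro rfl; omega), sub_zero] at h2
    · intro k l hkl
      by_cases h : k = l
      · subst h
        have h2 := hS k k (by omega)
        rw [Matrix.sub_apply, Matrix.one_apply_eq, sub_eq_zero] at h2
        simp [h2]
      · have h2 := hS k l (by omega)
        rw [Matrix.sub_apply, Matrix.one_apply_ne h, sub_zero] at h2
        simp [h, h2]

lemma isBU_mul {M M' : Matrix (Fin (Dsum nn t)) (Fin (Dsum nn t)) R}
    (h : IsBlockUnipotent nn M) (h' : IsBlockUnipotent nn M') :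
    IsBlockUnipotent nn (M * M') := by
  rw [isBU_iff_SU] at *
  have e : M * M' - 1 = (M - 1) + (M' - 1) + (M - 1) * (M' - 1) := by noncomm_ring
  rw [e]
  exact (h.add h').add (h.mul h')

lemma isBU_inv (ht : 0 < t) {M : Matrix (Fin (Dsum nn t)) (Fin (Dsum nn t)) R}
    (h : IsBlockUnipotent nn M) :
    ∃ M', IsBlockUnipotent nn M' ∧ M * M' = 1 ∧ M' * M = 1 := by
  rw [isBU_iff_SU] at h
  set S := M - 1 with hSdef
  have hM : M = 1 + S := by rw [hSdef]; abel
  have hnil : (-S) ^ t = 0 := by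
    rw [neg_pow, h.pow_eq_zero ht, mul_zero]
  refine ⟨∑ m ∈ Finset.range t, (-S) ^ m, ?_, ?_, ?_⟩
  · rw [isBU_iff_SU]
    intro k l hkl
    rw [Matrix.sub_apply, Matrix.sum_apply]
    have e1 : ∀ m ∈ Finset.range t, ((-S) ^ m) k l
        = if m = 0 then (1 : Matrix (Fin (Dsum nn t)) (Fin (Dsum nn t)) R) k l else 0 := by
      intro m _
      cases m with
      | zero => simp
      | succ m => simp [((h.neg).pow_succ' m) k l hkl]
    rw [Finset.sum_congr rfl e1, Finset.sum_ite_eq' (Finset.range t) 0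
      (fun _ => (1 : Matrix (Fin (Dsum nn t)) (Fin (Dsum nn t)) R) k l),
      if_pos (Finset.mem_range.2 ht), sub_self]
  · rw [hM, Finset.mul_sum]
    have e2 : ∀ m, (1 + S) * (-S) ^ m = (-S) ^ m - (-S) ^ (m + 1) := by
      intro m
      rw [pow_succ']
      noncomm_ring
    rw [Finset.sum_congr rfl fun m _ => e2 m, Finset.sum_range_sub', hnil, pow_zero, sub_zero]
  · rw [hM, Finset.sum_mul]
    have e2 : ∀ m, (-S) ^ m * (1 + S) = (-S) ^ m - (-S) ^ (m + 1) := by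
      intro m
      rw [pow_succ]
      noncomm_ring
    rw [Finset.sum_congr rfl fun m _ => e2 m, Finset.sum_range_sub', hnil, pow_zero, sub_zero]

end SUtheory

section Corner

variable {R : Type*}

/-- Embedding of an `i × (N-i)` matrix as a full-size matrix supported in the corner. -/
def emb [Zero R] (N i : ℕ) (B : Matrix (Fin i) (Fin (N - i)) R) :
    Matrix (Fin N) (Fin N) R := fun k l =>
  if h : (k : ℕ) < i ∧ i ≤ (l : ℕ) then
    B ⟨(k : ℕ), h.1⟩ ⟨(l : ℕ) - i, Nat.sub_lt_sub_right h.2 l.isLt⟩ else 0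

/-- Matrices supported in the corner `k < i ≤ l`. -/
def CornerSupp (N i : ℕ) [Zero R] (S : Matrix (Fin N) (Fin N) R) : Prop :=
  ∀ k l : Fin N, ¬ ((k : ℕ) < i ∧ i ≤ (l : ℕ)) → S k l = 0

lemma emb_cornerSupp [Zero R] {N i : ℕ} (B : Matrix (Fin i) (Fin (N - i)) R) :
    CornerSupp N i (emb N i B) := fun _ _ h => dif_neg h

lemma cornerSupp_mul_eq_zero [CommRing R] {N i : ℕ} {S S' : Matrix (Fin N) (Fin N) R}
    (h : CornerSupp N i S) (h' : CornerSupp N i S') : S * S' = 0 := by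
  ext k l
  rw [Matrix.mul_apply, Matrix.zero_apply]
  apply Finset.sum_eq_zero
  intro m _
  by_cases hm : (m : ℕ) < i
  · rw [h k m (by omega), zero_mul]
  · rw [h' m l (by omega), mul_zero]

lemma uMat_eq (N i : ℕ) (B : Matrix (Fin i) (Fin (N - i)) ℕ) :
    uMat p N i B = 1 + emb N i (B.map (fun x : ℕ => (x : ℚ_[p]))) := by
  ext k l
  rw [Matrix.add_apply]
  unfold uMat emb
  by_cases h : (k : ℕ) < i ∧ i ≤ (l : ℕ)
  · obtain ⟨h1, h2⟩ := h
    rw [dif_pos ⟨h1, h2⟩, dif_pos ⟨h1, h2⟩,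
      Matrix.one_apply_ne (by rintro rfl; omega), zero_add, Matrix.map_apply]
  · rw [dif_neg h, dif_neg h, add_zero, Matrix.one_apply]

lemma toQ_mul {N : ℕ} (a b : Matrix (Fin N) (Fin N) ℤ_[p]) :
    toQ p (a * b) = toQ p a * toQ p b := by
  unfold toQ
  rw [show (fun x : ℤ_[p] => (x : ℚ_[p])) = ⇑(PadicInt.Coe.ringHom (p := p)) from rfl,
    Matrix.map_mul]

lemma toQ_one {N : ℕ} : toQ p (1 : Matrix (Fin N) (Fin N) ℤ_[p]) = 1 := by
  unfold toQ
  rw [show (fun x : ℤ_[p] => (x : ℚ_[p])) = ⇑(PadicInt.Coe.ringHom (p := p)) from rfl]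
  exact Matrix.map_one _ (map_zero _) (map_one _)

lemma toQ_one_add_emb {N i : ℕ} (B : Matrix (Fin i) (Fin (N - i)) ℕ) :
    toQ p (1 + emb N i (B.map (fun x : ℕ => (x : ℤ_[p])))) = uMat p N i B := by
  rw [uMat_eq]
  ext k l
  unfold toQ
  rw [Matrix.map_apply, Matrix.add_apply, Matrix.add_apply]
  unfold emb
  by_cases h : (k : ℕ) < i ∧ i ≤ (l : ℕ)
  · obtain ⟨h1, h2⟩ := h
    rw [Matrix.one_apply_ne (by rintro rfl; omega),
      Matrix.one_apply_ne (by rintro rfl; omega)]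
    simp only [dif_pos (And.intro h1 h2), Matrix.map_apply]
    push_cast
    ring
  · rw [dif_neg h, dif_neg h, add_zero, add_zero]
    by_cases hkl : k = l
    · subst hkl; rw [Matrix.one_apply_eq, Matrix.one_apply_eq]; push_cast; ring
    · rw [Matrix.one_apply_ne hkl, Matrix.one_apply_ne hkl]; push_cast; ring

/-- Corner rescaling: multiply the corner block by `p`. -/
def scUp (N i : ℕ) (c : Matrix (Fin N) (Fin N) ℤ_[p]) : Matrix (Fin N) (Fin N) ℤ_[p] :=
  fun k l => if (k : ℕ) < i ∧ i ≤ (l : ℕ) then p * c k l else c k l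

lemma tMat_mul_toQ {N i : ℕ} (c : Matrix (Fin N) (Fin N) ℤ_[p])
    (hc : ∀ k l : Fin N, (l : ℕ) < i → i ≤ (k : ℕ) → c k l = 0) :
    tMat p N i * toQ p c = toQ p (scUp p N i c) * tMat p N i := by
  ext k l
  unfold tMat
  rw [Matrix.diagonal_mul, Matrix.mul_diagonal]
  unfold toQ
  rw [Matrix.map_apply, Matrix.map_apply]
  unfold scUp
  by_cases hk : (k : ℕ) < i <;> by_cases hl : (l : ℕ) < i
  · rw [if_pos hk, if_pos hl, if_neg (by omega)]; ring
  · rw [if_pos hk, if_neg hl, if_pos ⟨hk, by omega⟩]; push_cast; ring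
  · rw [if_neg hk, if_pos hl, hc k l hl (by omega)]
    simp [if_neg (show ¬ ((k : ℕ) < i ∧ i ≤ (l : ℕ)) by omega), hc k l hl (by omega)]
  · rw [if_neg hk, if_neg hl, if_neg (by omega)]; ring

end Corner

section Mixed
variable {t : ℕ} {nn : Fin t → ℕ} {R : Type*} [CommRing R] {i : ℕ}

lemma cornerSupp_SU {S : Matrix (Fin (Dsum nn t)) (Fin (Dsum nn t)) R}
    (hcb : ∀ k l : Fin (Dsum nn t), (k : ℕ) < i ∧ i ≤ (l : ℕ) → bfun nn k < bfun nn l)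
    (hS : CornerSupp (Dsum nn t) i S) : SU nn S := fun k l hkl =>
  hS k l fun hc => hkl (hcb k l hc)

lemma isBU_one_add {S : Matrix (Fin (Dsum nn t)) (Fin (Dsum nn t)) R}
    (hcb : ∀ k l : Fin (Dsum nn t), (k : ℕ) < i ∧ i ≤ (l : ℕ) → bfun nn k < bfun nn l)
    (hS : CornerSupp (Dsum nn t) i S) : IsBlockUnipotent nn (1 + S) := by
  rw [isBU_iff_SU]
  have e : 1 + S - 1 = S := by abel
  rw [e]
  exact cornerSupp_SU hcb hS

lemma isBU_of_eq_offCorner {M M' : Matrix (Fin (Dsum nn t)) (Fin (Dsum nn t)) R}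
    (hcb : ∀ k l : Fin (Dsum nn t), (k : ℕ) < i ∧ i ≤ (l : ℕ) → bfun nn k < bfun nn l)
    (h : IsBlockUnipotent nn M)
    (he : ∀ k l : Fin (Dsum nn t), ¬ ((k : ℕ) < i ∧ i ≤ (l : ℕ)) → M' k l = M k l) :
    IsBlockUnipotent nn M' := by
  constructor
  · intro k l hkl
    rw [he k l (fun hc => by have := hcb k l hc; omega), h.1 hkl]
  · intro k l hkl
    rw [he k l (fun hc => by have := hcb k l hc; omega), h.2 k l hkl]

end Mixed

/-- `N t_i N = ⨆_{B'} u(B')·t_i·N` (a disjoint union), where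
`N = P^u(ℤ_p)` and `B'` runs over the `i×(n−i)` matrices with entries in `{0,…,p−1}`. -/
theorem unipotent_double_coset_decomposition {t : ℕ} (nn : Fin t → ℕ)
    (hpos : ∀ j, 0 < nn j) (j : Fin t) :
    -- the double coset is the union of the cosets `u(B')·t_i·N`
    (∀ x : Matrix (Fin (Dsum nn t)) (Fin (Dsum nn t)) ℚ_[p],
      (∃ a b : Matrix (Fin (Dsum nn t)) (Fin (Dsum nn t)) ℤ_[p],
          IsBlockUnipotent nn a ∧ IsBlockUnipotent nn b ∧
          x = toQ p a * tMat p (Dsum nn t) (Dsum nn ((j : ℕ) + 1)) * toQ p b) ↔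
        (∃ (B' : Matrix (Fin (Dsum nn ((j : ℕ) + 1)))
              (Fin (Dsum nn t - Dsum nn ((j : ℕ) + 1))) ℕ),
          (∀ k l, B' k l < p) ∧
          ∃ c : Matrix (Fin (Dsum nn t)) (Fin (Dsum nn t)) ℤ_[p],
            IsBlockUnipotent nn c ∧
            x = uMat p (Dsum nn t) (Dsum nn ((j : ℕ) + 1)) B' *
              tMat p (Dsum nn t) (Dsum nn ((j : ℕ) + 1)) * toQ p c)) ∧
    -- disjointness of the union
    (∀ (B₁ B₂ : Matrix (Fin (Dsum nn ((j : ℕ) + 1)))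
        (Fin (Dsum nn t - Dsum nn ((j : ℕ) + 1))) ℕ),
      (∀ k l, B₁ k l < p) → (∀ k l, B₂ k l < p) →
      ∀ c₁ c₂ : Matrix (Fin (Dsum nn t)) (Fin (Dsum nn t)) ℤ_[p],
        IsBlockUnipotent nn c₁ → IsBlockUnipotent nn c₂ →
        uMat p (Dsum nn t) (Dsum nn ((j : ℕ) + 1)) B₁ *
            tMat p (Dsum nn t) (Dsum nn ((j : ℕ) + 1)) * toQ p c₁ =
          uMat p (Dsum nn t) (Dsum nn ((j : ℕ) + 1)) B₂ *
            tMat p (Dsum nn t) (Dsum nn ((j : ℕ) + 1)) * toQ p c₂ →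
        B₁ = B₂) := by
  have ht : 0 < t := j.pos
  set n := Dsum nn t with hn
  set i := Dsum nn ((j : ℕ) + 1) with hi
  have hin : i ≤ n := Dsum_mono nn j.isLt
  have hlt : ∀ k : Fin n, (k : ℕ) < i ↔ bfun nn k ≤ (j : ℕ) :=
    fun k => (blkOf_le_iff nn j.isLt).symm
  have hcb : ∀ k l : Fin n, (k : ℕ) < i ∧ i ≤ (l : ℕ) → bfun nn k < bfun nn l := by
    rintro k l ⟨h1, h2⟩
    have ha := (hlt k).1 h1
    have hb : ¬ bfun nn l ≤ (j : ℕ) := fun hh => by have := (hlt l).2 hh; omega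
    omega
  have hlower : ∀ c : Matrix (Fin n) (Fin n) ℤ_[p], IsBlockUnipotent nn c →
      ∀ k l : Fin n, (l : ℕ) < i → i ≤ (k : ℕ) → c k l = 0 := by
    intro c hc k l hl hk
    have ha := (hlt l).1 hl
    have hb : ¬ bfun nn k ≤ (j : ℕ) := fun hh => by have := (hlt k).2 hh; omega
    exact hc.1 (show bfun nn l < bfun nn k by omega)
  constructor
  · intro x
    constructor
    · rintro ⟨a, b, ha, hb, hx⟩
      have hscU : IsBlockUnipotent nn (scUp p n i b) :=
        isBU_of_eq_offCorner hcb hb (fun k l hkl => by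
          show (if (k : ℕ) < i ∧ i ≤ (l : ℕ) then (p : ℤ_[p]) * b k l else b k l) = b k l
          rw [if_neg hkl])
      set d := a * scUp p n i b with hd
      have hdU : IsBlockUnipotent nn d := isBU_mul ha hscU
      have hxd : x = toQ p d * tMat p n i := by
        rw [hx, mul_assoc, tMat_mul_toQ p b (hlower b hb), ← mul_assoc, ← toQ_mul, ← hd]
      set g : Matrix (Fin n) (Fin n) ℤ_[p] :=
        (fun k l => if (k : ℕ) < i ∧ i ≤ (l : ℕ) then 0 else d k l) with hgdef
      have hgd : ∀ k l : Fin n, ¬ ((k : ℕ) < i ∧ i ≤ (l : ℕ)) → g k l = d k l := by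
        intro k l hkl
        show (if (k : ℕ) < i ∧ i ≤ (l : ℕ) then 0 else d k l) = d k l
        rw [if_neg hkl]
      have hgcor : ∀ k l : Fin n, (k : ℕ) < i ∧ i ≤ (l : ℕ) → g k l = 0 := by
        intro k l hkl
        show (if (k : ℕ) < i ∧ i ≤ (l : ℕ) then 0 else d k l) = 0
        rw [if_pos hkl]
      have hgU : IsBlockUnipotent nn g := isBU_of_eq_offCorner hcb hdU hgd
      obtain ⟨g', hg'U, hgg', hg'g⟩ := isBU_inv ht hgU
      set h := d * g' with hhdef
      have hhU : IsBlockUnipotent nn h := isBU_mul hdU hg'U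
      have hcorner : CornerSupp n i (h - 1) := by
        intro k l hkl
        have hrow : ∀ m : Fin n, d k m * g' m l = g k m * g' m l := by
          intro m
          by_cases hcm : (k : ℕ) < i ∧ i ≤ (m : ℕ)
          · have hl : (l : ℕ) < i := by omega
            rw [hlower g' hg'U m l hl hcm.2, mul_zero, mul_zero]
          · rw [hgd k m hcm]
        have hde : h k l = (g * g') k l := by
          rw [hhdef, Matrix.mul_apply, Matrix.mul_apply]
          exact Finset.sum_congr rfl fun m _ => hrow m
        rw [Matrix.sub_apply, hde, hgg', sub_self]
      have hdecomp : d = h * g := by rw [hhdef, mul_assoc, hg'g, mul_one]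
      set B' : Matrix (Fin i) (Fin (n - i)) ℕ :=
        (fun k l => (h ⟨(k : ℕ), lt_of_lt_of_le k.isLt hin⟩
          ⟨i + (l : ℕ), by have := l.isLt; omega⟩).appr 1) with hB'def
      have hembB : ∀ k l : Fin n, ((k : ℕ) < i ∧ i ≤ (l : ℕ)) →
          emb n i (B'.map (fun x : ℕ => (x : ℤ_[p]))) k l = ((h k l).appr 1 : ℤ_[p]) := by
        intro k l hc
        show (if hcc : _ then _ else _) = _
        rw [dif_pos hc, Matrix.map_apply]
        have hstep : ∀ (a₁ b₁ : Fin n), (a₁ : ℕ) = (k : ℕ) → (b₁ : ℕ) = (l : ℕ) →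
            (((h a₁ b₁).appr 1 : ℕ) : ℤ_[p]) = (((h k l).appr 1 : ℕ) : ℤ_[p]) := by
          intro a₁ b₁ h1 h2
          rw [Fin.ext h1, Fin.ext h2]
        exact hstep _ _ rfl (by show i + ((l : ℕ) - i) = (l : ℕ); omega)
      set F := (h - 1) - emb n i (B'.map (fun x : ℕ => (x : ℤ_[p]))) with hFdef
      have hFcs : CornerSupp n i F := by
        intro k l hkl
        rw [hFdef, Matrix.sub_apply, hcorner k l hkl,
          emb_cornerSupp (B'.map (fun x : ℕ => (x : ℤ_[p]))) k l hkl, sub_zero]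
      have hFdvd : ∀ k l : Fin n, (p : ℤ_[p]) ∣ F k l := by
        intro k l
        by_cases hc : (k : ℕ) < i ∧ i ≤ (l : ℕ)
        · rw [hFdef, Matrix.sub_apply, Matrix.sub_apply,
            Matrix.one_apply_ne (show k ≠ l by rintro rfl; omega), sub_zero, hembB k l hc]
          have hsp := PadicInt.appr_spec 1 (h k l)
          rwa [Ideal.mem_span_singleton, pow_one] at hsp
        · rw [hFcs k l hc]
          exact dvd_zero _
      set d'' := (1 + F) * g with hd''def
      have hFU : IsBlockUnipotent nn (1 + F) := isBU_one_add hcb hFcs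
      have hd''U : IsBlockUnipotent nn d'' := isBU_mul hFU hgU
      have huB : (1 + emb n i (B'.map (fun x : ℕ => (x : ℤ_[p])))) * d'' = d := by
        have hz : emb n i (B'.map (fun x : ℕ => (x : ℤ_[p]))) * F = 0 :=
          cornerSupp_mul_eq_zero (emb_cornerSupp _) hFcs
        have e1 : (1 + emb n i (B'.map (fun x : ℕ => (x : ℤ_[p])))) * (1 + F)
            = 1 + emb n i (B'.map (fun x : ℕ => (x : ℤ_[p]))) + F
              + emb n i (B'.map (fun x : ℕ => (x : ℤ_[p]))) * F := by noncomm_ring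
        have e2 : (1 + emb n i (B'.map (fun x : ℕ => (x : ℤ_[p])))) * (1 + F) = h := by
          rw [e1, hz, add_zero, hFdef]
          abel
        rw [hd''def, ← mul_assoc, e2, ← hdecomp]
      have hd''dvd : ∀ k l : Fin n, (k : ℕ) < i → i ≤ (l : ℕ) → (p : ℤ_[p]) ∣ d'' k l := by
        intro k l h1 h2
        rw [hd''def, Matrix.mul_apply]
        apply Finset.dvd_sum
        intro m _
        rw [Matrix.add_apply, add_mul]
        apply dvd_add
        · by_cases hkm : k = m
          · subst hkm
            rw [Matrix.one_apply_eq, one_mul, hgcor k l ⟨h1, h2⟩]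
            exact dvd_zero _
          · rw [Matrix.one_apply_ne hkm, zero_mul]
            exact dvd_zero _
        · exact (hFdvd k m).mul_right _
      have hex : ∀ k l : Fin n, ∃ y : ℤ_[p],
          d'' k l = (if (k : ℕ) < i ∧ i ≤ (l : ℕ) then (p : ℤ_[p]) else 1) * y := by
        intro k l
        by_cases hc : (k : ℕ) < i ∧ i ≤ (l : ℕ)
        · obtain ⟨y, hy⟩ := hd''dvd k l hc.1 hc.2
          exact ⟨y, by rw [if_pos hc]; exact hy⟩
        · exact ⟨d'' k l, by rw [if_neg hc, one_mul]⟩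
      choose c hcval using hex
      have hscc : scUp p n i c = d'' := by
        ext k l
        show (if (k : ℕ) < i ∧ i ≤ (l : ℕ) then (p : ℤ_[p]) * c k l else c k l) = d'' k l
        by_cases hc : (k : ℕ) < i ∧ i ≤ (l : ℕ)
        · rw [if_pos hc, hcval k l, if_pos hc]
        · rw [if_neg hc, hcval k l, if_neg hc, one_mul]
      have hcU : IsBlockUnipotent nn c := by
        apply isBU_of_eq_offCorner hcb hd''U
        intro k l hkl
        have hcv := hcval k l
        rw [if_neg hkl, one_mul] at hcv
        exact hcv.symm
      refine ⟨B', ?_, c, hcU, ?_⟩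
      · intro k l
        show (h _ _).appr 1 < p
        have := PadicInt.appr_lt (h ⟨(k : ℕ), lt_of_lt_of_le k.isLt hin⟩
          ⟨i + (l : ℕ), by have := l.isLt; omega⟩) 1
        rwa [pow_one] at this
      · rw [hxd, ← huB, toQ_mul, toQ_one_add_emb, mul_assoc, mul_assoc]
        congr 1
        rw [tMat_mul_toQ p c (hlower c hcU), hscc]
    · rintro ⟨B', hB'lt, c, hcU, hx⟩
      refine ⟨1 + emb n i (B'.map (fun x : ℕ => (x : ℤ_[p]))), c,
        isBU_one_add hcb (emb_cornerSupp _), hcU, ?_⟩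
      rw [hx, toQ_one_add_emb]
  · intro B₁ B₂ hB1 hB2 c₁ c₂ hc₁ hc₂ heq
    obtain ⟨c₁', hc₁'U, hcc, hcc'⟩ := isBU_inv ht hc₁
    have einv : toQ p c₁ * toQ p c₁' = 1 := by rw [← toQ_mul, hcc, toQ_one]
    have h3 : uMat p n i B₁ * tMat p n i
        = uMat p n i B₂ * tMat p n i * toQ p (c₂ * c₁') := by
      calc uMat p n i B₁ * tMat p n i
          = uMat p n i B₁ * tMat p n i * (toQ p c₁ * toQ p c₁') := by rw [einv, mul_one]
        _ = uMat p n i B₁ * tMat p n i * toQ p c₁ * toQ p c₁' := by rw [← mul_assoc]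
        _ = uMat p n i B₂ * tMat p n i * toQ p c₂ * toQ p c₁' := by rw [heq]
        _ = uMat p n i B₂ * tMat p n i * toQ p (c₂ * c₁') := by rw [toQ_mul, mul_assoc]
    set M₁ := emb n i (B₁.map (fun x : ℕ => (x : ℚ_[p]))) with hM1def
    set M₂ := emb n i (B₂.map (fun x : ℕ => (x : ℚ_[p]))) with hM2def
    have hu2 : (1 - M₂) * uMat p n i B₂ = 1 := by
      rw [uMat_eq, ← hM2def]
      have e : (1 - M₂) * (1 + M₂) = 1 + M₂ - M₂ - M₂ * M₂ := by noncomm_ring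
      rw [e, cornerSupp_mul_eq_zero (emb_cornerSupp _) (emb_cornerSupp _), sub_zero]
      abel
    have hu12 : (1 - M₂) * uMat p n i B₁ = 1 + (M₁ - M₂) := by
      rw [uMat_eq, ← hM1def]
      have e : (1 - M₂) * (1 + M₁) = 1 + M₁ - M₂ - M₂ * M₁ := by noncomm_ring
      rw [e, cornerSupp_mul_eq_zero (emb_cornerSupp _) (emb_cornerSupp _), sub_zero]
      abel
    have key : (1 + (M₁ - M₂)) * tMat p n i = tMat p n i * toQ p (c₂ * c₁') := by
      calc (1 + (M₁ - M₂)) * tMat p n i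
          = (1 - M₂) * (uMat p n i B₁ * tMat p n i) := by rw [← mul_assoc, hu12]
        _ = (1 - M₂) * (uMat p n i B₂ * tMat p n i * toQ p (c₂ * c₁')) := by rw [h3]
        _ = ((1 - M₂) * uMat p n i B₂) * (tMat p n i * toQ p (c₂ * c₁')) := by
            noncomm_ring
        _ = tMat p n i * toQ p (c₂ * c₁') := by rw [hu2, one_mul]
    ext k l
    have hkn : (k : ℕ) < n := lt_of_lt_of_le k.isLt hin
    have hln : i + (l : ℕ) < n := by have := l.isLt; omega
    set k' : Fin n := ⟨(k : ℕ), hkn⟩ with hk'def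
    set l' : Fin n := ⟨i + (l : ℕ), hln⟩ with hl'def
    have ek : ((k' : Fin n) : ℕ) = (k : ℕ) := rfl
    have el : ((l' : Fin n) : ℕ) = i + (l : ℕ) := rfl
    have hne : k' ≠ l' := by
      intro hkl'
      have := congrArg Fin.val hkl'
      rw [ek, el] at this
      have := k.isLt
      omega
    have hM1v : M₁ k' l' = ((B₁ k l : ℕ) : ℚ_[p]) := by
      rw [hM1def]
      show (if hcc : _ then _ else _) = _
      rw [dif_pos ⟨show ((k' : Fin n) : ℕ) < i from k.isLt,
        show i ≤ ((l' : Fin n) : ℕ) from by rw [el]; omega⟩]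
      have hstep : ∀ (a : Fin i) (b : Fin (n - i)), (a : ℕ) = (k : ℕ) → (b : ℕ) = (l : ℕ) →
          (B₁.map (fun x : ℕ => (x : ℚ_[p]))) a b = ((B₁ k l : ℕ) : ℚ_[p]) := by
        intro a b h1 h2
        rw [Fin.ext h1, Fin.ext h2, Matrix.map_apply]
      exact hstep _ _ rfl (by show i + (l : ℕ) - i = (l : ℕ); omega)
    have hM2v : M₂ k' l' = ((B₂ k l : ℕ) : ℚ_[p]) := by
      rw [hM2def]
      show (if hcc : _ then _ else _) = _
      rw [dif_pos ⟨show ((k' : Fin n) : ℕ) < i from k.isLt,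
        show i ≤ ((l' : Fin n) : ℕ) from by rw [el]; omega⟩]
      have hstep : ∀ (a : Fin i) (b : Fin (n - i)), (a : ℕ) = (k : ℕ) → (b : ℕ) = (l : ℕ) →
          (B₂.map (fun x : ℕ => (x : ℚ_[p]))) a b = ((B₂ k l : ℕ) : ℚ_[p]) := by
        intro a b h1 h2
        rw [Fin.ext h1, Fin.ext h2, Matrix.map_apply]
      exact hstep _ _ rfl (by show i + (l : ℕ) - i = (l : ℕ); omega)
    have hval : ((1 + (M₁ - M₂)) * tMat p n i) k' l'
        = (tMat p n i * toQ p (c₂ * c₁')) k' l' := by rw [key]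
    have hnl : ¬ ((l' : Fin n) : ℕ) < i := by rw [el]; omega
    have hkk : ((k' : Fin n) : ℕ) < i := k.isLt
    rw [show tMat p n i
        = Matrix.diagonal (fun k : Fin n => if (k : ℕ) < i then (p : ℚ_[p]) else 1) from rfl] at hval
    simp only [Matrix.mul_diagonal, Matrix.diagonal_mul] at hval
    rw [if_neg hnl, if_pos hkk, mul_one,
      Matrix.add_apply, Matrix.sub_apply, Matrix.one_apply_ne hne, hM1v, hM2v,
      zero_add,
      show toQ p (c₂ * c₁') k' l' = (((c₂ * c₁') k' l' : ℤ_[p]) : ℚ_[p]) from rfl] at hval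
    have hq : (((B₁ k l : ℤ) - (B₂ k l : ℤ) : ℤ) : ℚ_[p])
        = (p : ℚ_[p]) * (((c₂ * c₁') k' l' : ℤ_[p]) : ℚ_[p]) := by
      push_cast
      push_cast at hval
      rw [← hval]
    have hnorm : ‖(((B₁ k l : ℤ) - (B₂ k l : ℤ) : ℤ) : ℚ_[p])‖ < 1 := by
      rw [hq, norm_mul]
      have h1 : ‖(p : ℚ_[p])‖ = (p : ℝ)⁻¹ := Padic.norm_p
      have h2 : ‖(((c₂ * c₁') k' l' : ℤ_[p]) : ℚ_[p])‖ ≤ 1 := PadicInt.norm_le_one _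
      have hp1 : (1 : ℝ) < p := by exact_mod_cast (Fact.out : p.Prime).one_lt
      calc ‖(p : ℚ_[p])‖ * ‖(((c₂ * c₁') k' l' : ℤ_[p]) : ℚ_[p])‖
          ≤ ‖(p : ℚ_[p])‖ * 1 := mul_le_mul_of_nonneg_left h2 (norm_nonneg _)
        _ = (p : ℝ)⁻¹ := by rw [h1, mul_one]
        _ < 1 := inv_lt_one_of_one_lt₀ hp1
    have hdvd : (p : ℤ) ∣ ((B₁ k l : ℤ) - (B₂ k l : ℤ)) :=
      Padic.norm_intCast_lt_one_iff.1 hnorm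
    have hmm : (B₂ k l : ℤ) % p = (B₁ k l : ℤ) % p := Int.modEq_iff_dvd.2 hdvd
    rw [Int.emod_eq_of_lt (by positivity) (by exact_mod_cast hB2 k l),
      Int.emod_eq_of_lt (by positivity) (by exact_mod_cast hB1 k l)] at hmm
    exact_mod_cast hmm.symm

end PIw
end
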